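/- For any two distinct sinks j ≠ j', the maximum cardinality of a clique of Ĝ contained in V̂_j ∪ V̂_{j'} equals n + max(0, m_{j,j'} − n_{j'}, m_{j',j} − n_j). -/

import Mathlib

/-- Vertex type of the coloring graph `Ĝ`: the sink subgraph `V̂_j` consists of
`nj j` regular vertices (`Sum.inl`) and `n - nj j` fictitious vertices (`Sum.inr`). -/
abbrev ColoringVertex (t : ℕ) (nj : Fin t → ℕ) (n : ℕ) : Type :=
  (j : Fin t) × (Fin (nj j) ⊕ Fin (n - nj j))

/-- `cross R x y` holds when `x` is a regular vertex `v_{j,k}`, `y` is a fictitious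
vertex of a different sink subgraph `V̂_{j'}`, and the contamination relation
`R j k j'` holds. -/
def cross {t n : ℕ} {nj : Fin t → ℕ} (R : (j : Fin t) → Fin (nj j) → Fin t → Prop)
    (x y : ColoringVertex t nj n) : Prop :=
  x.1 ≠ y.1 ∧ (∃ k : Fin (nj x.1), x.2 = Sum.inl k ∧ R x.1 k y.1) ∧
    ∃ k' : Fin (n - nj y.1), y.2 = Sum.inr k'

/-- The coloring graph `Ĝ`: two distinct vertices in the same sink subgraph are
always adjacent; a regular vertex `v_{j,k}` is adjacent to every fictitious vertex
of `V̂_{j'}` (for `j' ≠ j`) iff `R j k j'`; there are no other adjacencies. -/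
def coloringGraph (t n : ℕ) (nj : Fin t → ℕ)
    (R : (j : Fin t) → Fin (nj j) → Fin t → Prop) :
    SimpleGraph (ColoringVertex t nj n) where
  Adj x y := x ≠ y ∧ (x.1 = y.1 ∨ cross R x y ∨ cross R y x)
  symm := by
    constructor
    rintro x y ⟨h1, h2⟩
    refine ⟨h1.symm, ?_⟩
    rcases h2 with h | h | h
    · exact Or.inl h.symm
    · exact Or.inr (Or.inr h)
    · exact Or.inr (Or.inl h)
  loopless := ⟨fun x h => h.1 rfl⟩

/-- For distinct sinks `j ≠ j'`, the maximum cardinality of a clique of `Ĝ`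
contained in `V̂_j ∪ V̂_{j'}` equals `n + max (0) (m_{j,j'} - n_{j'}) (m_{j',j} - n_j)`
(the outer `max 0 ⬝` is automatic from truncated `ℕ`-subtraction). -/
lemma aux_inj1 {t n : ℕ} {nj : Fin t → ℕ} (j : Fin t) :
    Function.Injective (fun k : Fin (nj j) => (⟨j, Sum.inl k⟩ : ColoringVertex t nj n)) := by
  intro a b h; simpa using h

lemma aux_inj2 {t n : ℕ} {nj : Fin t → ℕ} (j : Fin t) :
    Function.Injective (fun k : Fin (n - nj j) => (⟨j, Sum.inr k⟩ : ColoringVertex t nj n)) := by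
  intro a b h; simpa using h

lemma aux_ncard_le {m : ℕ} (A : Set (Fin m)) : A.ncard ≤ m := by
  have := Set.ncard_le_ncard (Set.subset_univ A) (Set.toFinite _)
  simpa [Set.ncard_univ, Nat.card_eq_fintype_card] using this

lemma ncard_decomp {t n : ℕ} {nj : Fin t → ℕ} (j j' : Fin t) (hjj' : j ≠ j')
    (S : Set (ColoringVertex t nj n)) (hS : ∀ x ∈ S, x.1 = j ∨ x.1 = j') :
    S.ncard = {k : Fin (nj j) | ⟨j, Sum.inl k⟩ ∈ S}.ncard
      + {k : Fin (n - nj j) | ⟨j, Sum.inr k⟩ ∈ S}.ncard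
      + {k : Fin (nj j') | ⟨j', Sum.inl k⟩ ∈ S}.ncard
      + {k : Fin (n - nj j') | ⟨j', Sum.inr k⟩ ∈ S}.ncard := by
  have hrepr : S =
      (fun k : Fin (nj j) => (⟨j, Sum.inl k⟩ : ColoringVertex t nj n)) '' {k | ⟨j, Sum.inl k⟩ ∈ S}
      ∪ ((fun k : Fin (n - nj j) => (⟨j, Sum.inr k⟩ : ColoringVertex t nj n)) '' {k | ⟨j, Sum.inr k⟩ ∈ S}
      ∪ ((fun k : Fin (nj j') => (⟨j', Sum.inl k⟩ : ColoringVertex t nj n)) '' {k | ⟨j', Sum.inl k⟩ ∈ S}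
      ∪ (fun k : Fin (n - nj j') => (⟨j', Sum.inr k⟩ : ColoringVertex t nj n)) '' {k | ⟨j', Sum.inr k⟩ ∈ S})) := by
    ext x
    constructor
    · intro hx
      obtain ⟨jx, sx⟩ := x
      rcases hS _ hx with rfl | rfl
      · rcases sx with k | k
        · exact Or.inl ⟨k, hx, rfl⟩
        · exact Or.inr (Or.inl ⟨k, hx, rfl⟩)
      · rcases sx with k | k
        · exact Or.inr (Or.inr (Or.inl ⟨k, hx, rfl⟩))
        · exact Or.inr (Or.inr (Or.inr ⟨k, hx, rfl⟩))
    · rintro (⟨k, hk, rfl⟩ | ⟨k, hk, rfl⟩ | ⟨k, hk, rfl⟩ | ⟨k, hk, rfl⟩) <;> exact hk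
  have d1 : Disjoint
      ((fun k : Fin (nj j) => (⟨j, Sum.inl k⟩ : ColoringVertex t nj n)) '' {k | ⟨j, Sum.inl k⟩ ∈ S})
      (((fun k : Fin (n - nj j) => (⟨j, Sum.inr k⟩ : ColoringVertex t nj n)) '' {k | ⟨j, Sum.inr k⟩ ∈ S}
      ∪ ((fun k : Fin (nj j') => (⟨j', Sum.inl k⟩ : ColoringVertex t nj n)) '' {k | ⟨j', Sum.inl k⟩ ∈ S}
      ∪ (fun k : Fin (n - nj j') => (⟨j', Sum.inr k⟩ : ColoringVertex t nj n)) '' {k | ⟨j', Sum.inr k⟩ ∈ S}))) := by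
    rw [Set.disjoint_left]
    rintro x ⟨k, hk, rfl⟩ (⟨k', hk', h⟩ | ⟨k', hk', h⟩ | ⟨k', hk', h⟩) <;>
      simp only [Sigma.mk.inj_iff] at h <;>
      first
        | exact hjj' h.1.symm
        | exact absurd (eq_of_heq h.2) (by simp)
  have d2 : Disjoint
      ((fun k : Fin (n - nj j) => (⟨j, Sum.inr k⟩ : ColoringVertex t nj n)) '' {k | ⟨j, Sum.inr k⟩ ∈ S})
      (((fun k : Fin (nj j') => (⟨j', Sum.inl k⟩ : ColoringVertex t nj n)) '' {k | ⟨j', Sum.inl k⟩ ∈ S}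
      ∪ (fun k : Fin (n - nj j') => (⟨j', Sum.inr k⟩ : ColoringVertex t nj n)) '' {k | ⟨j', Sum.inr k⟩ ∈ S})) := by
    rw [Set.disjoint_left]
    rintro x ⟨k, hk, rfl⟩ (⟨k', hk', h⟩ | ⟨k', hk', h⟩) <;>
      simp only [Sigma.mk.inj_iff] at h <;>
      exact hjj' h.1.symm
  have d3 : Disjoint
      ((fun k : Fin (nj j') => (⟨j', Sum.inl k⟩ : ColoringVertex t nj n)) '' {k | ⟨j', Sum.inl k⟩ ∈ S})
      ((fun k : Fin (n - nj j') => (⟨j', Sum.inr k⟩ : ColoringVertex t nj n)) '' {k | ⟨j', Sum.inr k⟩ ∈ S}) := by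
    rw [Set.disjoint_left]
    rintro x ⟨k, hk, rfl⟩ ⟨k', hk', h⟩
    simp only [Sigma.mk.inj_iff] at h
    exact absurd (eq_of_heq h.2) (by simp)
  conv_lhs => rw [hrepr]
  rw [Set.ncard_union_eq d1 (Set.toFinite _) (Set.toFinite _),
    Set.ncard_union_eq d2 (Set.toFinite _) (Set.toFinite _),
    Set.ncard_union_eq d3 (Set.toFinite _) (Set.toFinite _),
    Set.ncard_image_of_injective _ (aux_inj1 j),
    Set.ncard_image_of_injective _ (aux_inj2 j),
    Set.ncard_image_of_injective _ (aux_inj1 j'),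
    Set.ncard_image_of_injective _ (aux_inj2 j')]
  omega

/-- Construction: full sink subgraph `V̂_j` is a clique of size `nj j + (n - nj j)`. -/
lemma clique_S0 {t n : ℕ} {nj : Fin t → ℕ}
    (R : (j : Fin t) → Fin (nj j) → Fin t → Prop) (j j' : Fin t) (hjj' : j ≠ j') :
    ∃ S : Set (ColoringVertex t nj n),
      (coloringGraph t n nj R).IsClique S ∧ (∀ x ∈ S, x.1 = j ∨ x.1 = j') ∧
      S.ncard = nj j + (n - nj j) := by
  refine ⟨{x | x.1 = j}, ?_, fun x hx => Or.inl hx, ?_⟩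
  · intro x hx y hy hne
    exact ⟨hne, Or.inl (hx.trans hy.symm)⟩
  · rw [ncard_decomp j j' hjj' {x | x.1 = j} (fun x hx => Or.inl hx)]
    have e1 : {k : Fin (nj j) | (⟨j, Sum.inl k⟩ : ColoringVertex t nj n) ∈ {x | x.1 = j}} = Set.univ := by
      ext k; simp
    have e2 : {k : Fin (n - nj j) | (⟨j, Sum.inr k⟩ : ColoringVertex t nj n) ∈ {x | x.1 = j}} = Set.univ := by
      ext k; simp
    have e3 : {k : Fin (nj j') | (⟨j', Sum.inl k⟩ : ColoringVertex t nj n) ∈ {x | x.1 = j}} = ∅ := by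
      ext k; simp [hjj'.symm]
    have e4 : {k : Fin (n - nj j') | (⟨j', Sum.inr k⟩ : ColoringVertex t nj n) ∈ {x | x.1 = j}} = ∅ := by
      ext k; simp [hjj'.symm]
    rw [e1, e2, e3, e4]
    simp [Set.ncard_univ, Nat.card_eq_fintype_card]

/-- Construction: the `R`-related regular vertices of `V̂_j` together with all
fictitious vertices of `V̂_{j'}` form a clique. -/
lemma clique_S1 {t n : ℕ} {nj : Fin t → ℕ}
    (R : (j : Fin t) → Fin (nj j) → Fin t → Prop) (j j' : Fin t) (hjj' : j ≠ j') :
    ∃ S : Set (ColoringVertex t nj n),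
      (coloringGraph t n nj R).IsClique S ∧ (∀ x ∈ S, x.1 = j ∨ x.1 = j') ∧
      S.ncard = {k : Fin (nj j) | R j k j'}.ncard + (n - nj j') := by
  refine ⟨{x | ∃ k : Fin (nj j), x = ⟨j, Sum.inl k⟩ ∧ R j k j'}
      ∪ {x | ∃ k : Fin (n - nj j'), x = ⟨j', Sum.inr k⟩}, ?_, ?_, ?_⟩
  · rintro x (⟨k, rfl, hk⟩ | ⟨k, rfl⟩) y (⟨k2, rfl, hk2⟩ | ⟨k2, rfl⟩) hne
    · exact ⟨hne, Or.inl rfl⟩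
    · exact ⟨hne, Or.inr (Or.inl ⟨hjj', ⟨k, rfl, hk⟩, ⟨k2, rfl⟩⟩)⟩
    · exact ⟨hne, Or.inr (Or.inr ⟨hjj', ⟨k2, rfl, hk2⟩, ⟨k, rfl⟩⟩)⟩
    · exact ⟨hne, Or.inl rfl⟩
  · rintro x (⟨k, rfl, hk⟩ | ⟨k, rfl⟩)
    · exact Or.inl rfl
    · exact Or.inr rfl
  · rw [ncard_decomp j j' hjj' _ (by rintro x (⟨k, rfl, hk⟩ | ⟨k, rfl⟩); exacts [Or.inl rfl, Or.inr rfl])]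
    have e1 : {k : Fin (nj j) | (⟨j, Sum.inl k⟩ : ColoringVertex t nj n) ∈
        ({x | ∃ k : Fin (nj j), x = ⟨j, Sum.inl k⟩ ∧ R j k j'}
          ∪ {x | ∃ k : Fin (n - nj j'), x = ⟨j', Sum.inr k⟩})} = {k | R j k j'} := by
      ext k
      simp only [Set.mem_setOf_eq, Set.mem_union, Sigma.mk.inj_iff]
      constructor
      · rintro (⟨k2, ⟨-, h2⟩, hR⟩ | ⟨k2, h1, -⟩)
        · obtain rfl : k = k2 := by simpa using eq_of_heq h2
          exact hR
        · exact absurd h1 hjj'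
      · intro hR
        refine Or.inl ⟨k, ?_, hR⟩
        simp
    have e2 : {k : Fin (n - nj j) | (⟨j, Sum.inr k⟩ : ColoringVertex t nj n) ∈
        ({x | ∃ k : Fin (nj j), x = ⟨j, Sum.inl k⟩ ∧ R j k j'}
          ∪ {x | ∃ k : Fin (n - nj j'), x = ⟨j', Sum.inr k⟩})} = ∅ := by
      ext k
      simp only [Set.mem_setOf_eq, Set.mem_union, Sigma.mk.inj_iff, Set.mem_empty_iff_false, iff_false]
      rintro (⟨k2, ⟨-, h2⟩, -⟩ | ⟨k2, h1, -⟩)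
      · exact absurd (eq_of_heq h2) (by simp)
      · exact hjj' h1
    have e3 : {k : Fin (nj j') | (⟨j', Sum.inl k⟩ : ColoringVertex t nj n) ∈
        ({x | ∃ k : Fin (nj j), x = ⟨j, Sum.inl k⟩ ∧ R j k j'}
          ∪ {x | ∃ k : Fin (n - nj j'), x = ⟨j', Sum.inr k⟩})} = ∅ := by
      ext k
      simp only [Set.mem_setOf_eq, Set.mem_union, Sigma.mk.inj_iff, Set.mem_empty_iff_false, iff_false]
      rintro (⟨k2, ⟨h1, -⟩, -⟩ | ⟨k2, ⟨-, h2⟩⟩)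
      · exact hjj' h1.symm
      · exact absurd (eq_of_heq h2) (by simp)
    have e4 : {k : Fin (n - nj j') | (⟨j', Sum.inr k⟩ : ColoringVertex t nj n) ∈
        ({x | ∃ k : Fin (nj j), x = ⟨j, Sum.inl k⟩ ∧ R j k j'}
          ∪ {x | ∃ k : Fin (n - nj j'), x = ⟨j', Sum.inr k⟩})} = Set.univ := by
      ext k
      simp only [Set.mem_setOf_eq, Set.mem_union, Set.mem_univ, iff_true]
      exact Or.inr ⟨k, rfl⟩
    rw [e1, e2, e3, e4]
    simp [Set.ncard_univ, Nat.card_eq_fintype_card]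


theorem max_clique_in_pair_of_sink_subgraphs
    (t n : ℕ) (ht : 1 ≤ t) (nj : Fin t → ℕ) (hnj : ∀ j, 1 ≤ nj j)
    (hn : n = Finset.univ.sup nj)
    (R : (j : Fin t) → Fin (nj j) → Fin t → Prop)
    (j j' : Fin t) (hjj' : j ≠ j') :
    IsGreatest
      {c : ℕ | ∃ S : Set (ColoringVertex t nj n),
        (coloringGraph t n nj R).IsClique S ∧ (∀ x ∈ S, x.1 = j ∨ x.1 = j') ∧
        S.ncard = c}
      (n + max ({k : Fin (nj j) | R j k j'}.ncard - nj j')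
               ({k : Fin (nj j') | R j' k j}.ncard - nj j)) := by
  have hnja : nj j ≤ n := hn ▸ Finset.le_sup (Finset.mem_univ j)
  have hnjb : nj j' ≤ n := hn ▸ Finset.le_sup (Finset.mem_univ j')
  have hm1le : {k : Fin (nj j) | R j k j'}.ncard ≤ nj j := aux_ncard_le _
  have hm2le : {k : Fin (nj j') | R j' k j}.ncard ≤ nj j' := aux_ncard_le _
  constructor
  · -- membership: construct an optimal clique
    rcases Nat.le_total ({k : Fin (nj j) | R j k j'}.ncard - nj j')
        ({k : Fin (nj j') | R j' k j}.ncard - nj j) with h | h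
    · rw [max_eq_right h]
      by_cases h2 : {k : Fin (nj j') | R j' k j}.ncard ≤ nj j
      · obtain ⟨S, hc, hs, hcard⟩ := clique_S0 (n := n) R j j' hjj'
        exact ⟨S, hc, hs, by omega⟩
      · obtain ⟨S, hc, hs, hcard⟩ := clique_S1 (n := n) R j' j hjj'.symm
        exact ⟨S, hc, fun x hx => (hs x hx).symm, by omega⟩
    · rw [max_eq_left h]
      by_cases h2 : {k : Fin (nj j) | R j k j'}.ncard ≤ nj j'
      · obtain ⟨S, hc, hs, hcard⟩ := clique_S0 (n := n) R j j' hjj'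
        exact ⟨S, hc, hs, by omega⟩
      · obtain ⟨S, hc, hs, hcard⟩ := clique_S1 (n := n) R j j' hjj'
        exact ⟨S, hc, hs, by omega⟩
  · -- upper bound
    rintro c ⟨S, hcl, hsink, rfl⟩
    rw [ncard_decomp j j' hjj' S hsink]
    set A := {k : Fin (nj j) | (⟨j, Sum.inl k⟩ : ColoringVertex t nj n) ∈ S} with hA
    set B := {k : Fin (n - nj j) | (⟨j, Sum.inr k⟩ : ColoringVertex t nj n) ∈ S} with hB
    set C := {k : Fin (nj j') | (⟨j', Sum.inl k⟩ : ColoringVertex t nj n) ∈ S} with hC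
    set D := {k : Fin (n - nj j') | (⟨j', Sum.inr k⟩ : ColoringVertex t nj n) ∈ S} with hD
    have ha : A.ncard ≤ nj j := aux_ncard_le _
    have hb : B.ncard ≤ n - nj j := aux_ncard_le _
    have hc : C.ncard ≤ nj j' := aux_ncard_le _
    have hd : D.ncard ≤ n - nj j' := aux_ncard_le _
    have hac : A.ncard = 0 ∨ C.ncard = 0 := by
      by_contra hcon
      push_neg at hcon
      obtain ⟨a, haS⟩ := Set.nonempty_of_ncard_ne_zero hcon.1
      obtain ⟨cc, hcS⟩ := Set.nonempty_of_ncard_ne_zero hcon.2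
      have hadj := hcl haS hcS (fun h => hjj' (congrArg Sigma.fst h))
      rcases hadj.2 with h | h | h
      · exact hjj' h
      · obtain ⟨-, -, k', hk'⟩ := h; exact absurd hk' (by simp)
      · obtain ⟨-, -, k', hk'⟩ := h; exact absurd hk' (by simp)
    have hbd : B.ncard = 0 ∨ D.ncard = 0 := by
      by_contra hcon
      push_neg at hcon
      obtain ⟨b, hbS⟩ := Set.nonempty_of_ncard_ne_zero hcon.1
      obtain ⟨d, hdS⟩ := Set.nonempty_of_ncard_ne_zero hcon.2
      have hadj := hcl hbS hdS (fun h => hjj' (congrArg Sigma.fst h))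
      rcases hadj.2 with h | h | h
      · exact hjj' h
      · obtain ⟨-, ⟨k, hk, -⟩, -⟩ := h; exact absurd hk (by simp)
      · obtain ⟨-, ⟨k, hk, -⟩, -⟩ := h; exact absurd hk (by simp)
    have had : D.ncard = 0 ∨ A.ncard ≤ {k : Fin (nj j) | R j k j'}.ncard := by
      by_cases hD0 : D.ncard = 0
      · exact Or.inl hD0
      right
      obtain ⟨d, hdS⟩ := Set.nonempty_of_ncard_ne_zero hD0
      refine Set.ncard_le_ncard ?_ (Set.toFinite _)
      intro a haS
      have hadj := hcl haS hdS (fun h => hjj' (congrArg Sigma.fst h))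
      rcases hadj.2 with h | h | h
      · exact absurd h hjj'
      · obtain ⟨-, ⟨k, hk, hR⟩, -⟩ := h
        obtain rfl : a = k := by simpa using hk
        exact hR
      · obtain ⟨-, ⟨k, hk, -⟩, -⟩ := h; exact absurd hk (by simp)
    have hbc : B.ncard = 0 ∨ C.ncard ≤ {k : Fin (nj j') | R j' k j}.ncard := by
      by_cases hB0 : B.ncard = 0
      · exact Or.inl hB0
      right
      obtain ⟨b, hbS⟩ := Set.nonempty_of_ncard_ne_zero hB0
      refine Set.ncard_le_ncard ?_ (Set.toFinite _)
      intro cc hcS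
      have hadj := hcl hcS hbS (fun h => hjj' (congrArg Sigma.fst h).symm)
      rcases hadj.2 with h | h | h
      · exact absurd h hjj'.symm
      · obtain ⟨-, ⟨k, hk, hR⟩, -⟩ := h
        obtain rfl : cc = k := by simpa using hk
        exact hR
      · obtain ⟨-, ⟨k, hk, -⟩, -⟩ := h; exact absurd hk (by simp)
    rcases Nat.le_total ({k : Fin (nj j) | R j k j'}.ncard - nj j')
        ({k : Fin (nj j') | R j' k j}.ncard - nj j) with h | h
    · rw [max_eq_right h]; omega
    · rw [max_eq_left h]; omega
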